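/- Let $\Cat_\Ring$ be an $\Ring$-linear abelian category in which every object $N$ is separated in the $\mathfrak{m}$-adic topology (i.e. $N \hookrightarrow \varprojlim N/\mathfrak{m}^k N$), where $\mathfrak{m}$ is the maximal ideal of the complete local ring $\Ring = \mathbb{C}[[x_1,\ldots,x_k]]$. Then for $M \in D^-(\Cat_\Ring)$, $M$ lies in $D^b(\Cat_\Ring)$ if and only if $\mathbb{C} \otimes^L_\Ring M$ lies in $D^b(\Cat)$, where $\Cat$ is the full subcategory of objects killed by $\mathfrak{m}$. -/

import Mathlib

open MvPowerSeries Finsupp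

namespace Stmt4Aux

variable {k : ℕ}

local notation "R'" => MvPowerSeries (Fin k) ℂ

/-- The ideal of power series whose coefficients vanish on all exponents supported
outside `S`. -/
noncomputable def Jdl (k : ℕ) (S : Finset (Fin k)) : Ideal (MvPowerSeries (Fin k) ℂ) where
  carrier := {f | ∀ e : Fin k →₀ ℕ, (∀ q ∈ S, e q = 0) → coeff e f = 0}
  add_mem' := by
    intro a b ha hb e he
    rw [map_add, ha e he, hb e he, add_zero]
  zero_mem' := by
    intro e he
    exact map_zero _
  smul_mem' := by
    intro c f hf e he
    rw [smul_eq_mul, coeff_mul]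
    refine Finset.sum_eq_zero fun p hp => ?_
    rw [Finset.HasAntidiagonal.mem_antidiagonal] at hp
    rw [hf p.2 (fun q hq => ?_), mul_zero]
    have h1 : p.1 q + p.2 q = e q := by rw [← Finsupp.add_apply, hp]
    have h2 := he q hq
    omega

lemma mem_Jdl {S : Finset (Fin k)} {f : R'} :
    f ∈ Jdl k S ↔ ∀ e : Fin k →₀ ℕ, (∀ q ∈ S, e q = 0) → coeff e f = 0 := Iff.rfl

lemma Jdl_mono {S T : Finset (Fin k)} (h : S ⊆ T) : Jdl k S ≤ Jdl k T := by
  intro f hf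
  rw [mem_Jdl] at hf ⊢
  intro e he
  exact hf e fun q hq => he q (h hq)

lemma X_mem_Jdl {S : Finset (Fin k)} {p : Fin k} (hp : p ∈ S) : (X p : R') ∈ Jdl k S := by
  classical
  rw [mem_Jdl]
  intro e he
  rw [coeff_X]
  split
  · next h =>
      exfalso
      have := he p hp
      rw [h, Finsupp.single_apply, if_pos rfl] at this
      omega
  · rfl

lemma Jdl_empty : Jdl k ∅ = ⊥ := by
  ext f
  simp only [mem_Jdl, Submodule.mem_bot]
  constructor
  · intro h
    ext e
    exact h e (by simp)
  · rintro rfl e _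
    exact map_zero _

lemma Jdl_univ : Jdl k Finset.univ = IsLocalRing.maximalIdeal R' := by
  ext f
  rw [mem_Jdl, IsLocalRing.mem_maximalIdeal, mem_nonunits_iff]
  constructor
  · intro h hu
    have h0 := h 0 (fun q _ => rfl)
    rw [MvPowerSeries.isUnit_iff_constantCoeff] at hu
    rw [← coeff_zero_eq_constantCoeff_apply] at hu
    rw [h0] at hu
    exact not_isUnit_zero hu
  · intro h e he
    have he0 : e = 0 := by
      ext q
      exact he q (Finset.mem_univ q)
    subst he0
    by_contra hne
    apply h
    rw [MvPowerSeries.isUnit_iff_constantCoeff, ← coeff_zero_eq_constantCoeff_apply]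
    exact isUnit_iff_ne_zero.mpr hne

lemma X_mul_mem_Jdl {S : Finset (Fin k)} {q : Fin k} (hq : q ∉ S) {f : R'}
    (hf : (X q : R') * f ∈ Jdl k S) : f ∈ Jdl k S := by
  rw [mem_Jdl] at hf ⊢
  intro e he
  have h2 : ∀ q' ∈ S, (e + Finsupp.single q 1 : Fin k →₀ ℕ) q' = 0 := by
    intro q' hq'
    rw [Finsupp.add_apply, he q' hq', Finsupp.single_apply]
    have : q ≠ q' := fun h => hq (h ▸ hq')
    rw [if_neg this, add_zero]
  have := hf (e + Finsupp.single q 1) h2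
  rw [X, coeff_monomial_mul, if_pos le_add_self, one_mul, add_tsub_cancel_right] at this
  exact this

lemma Jdl_insert_le (p : Fin k) (S : Finset (Fin k)) :
    Jdl k (insert p S) ≤ Jdl k S ⊔ Ideal.span {(X p : R')} := by
  classical
  intro f hf
  rw [mem_Jdl] at hf
  set g : R' := (fun e => coeff (e + Finsupp.single p 1) f) with hg
  set h : R' := (fun e => if e p = 0 then coeff e f else 0) with hh
  have hcg : ∀ e, coeff e g = coeff (e + Finsupp.single p 1) f := fun e => rfl
  have hch : ∀ e, coeff e h = if e p = 0 then coeff e f else 0 := fun e => rfl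
  have hsplit : f = h + X p * g := by
    ext e
    rw [map_add]
    by_cases hep : e p = 0
    · have hns : ¬ (Finsupp.single p 1 ≤ e) := by
        rw [Finsupp.single_le_iff]
        omega
      rw [X, coeff_monomial_mul, if_neg hns, hch, if_pos hep, add_zero]
    · have hs : Finsupp.single p 1 ≤ e := by
        rw [Finsupp.single_le_iff]
        omega
      rw [X, coeff_monomial_mul, if_pos hs, one_mul, hch, if_neg hep, hcg,
        tsub_add_cancel_of_le hs, zero_add]
  rw [hsplit]
  refine Submodule.add_mem _ (Ideal.mem_sup_left ?_) (Ideal.mem_sup_right ?_)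
  · rw [mem_Jdl]
    intro e he
    rw [hch]
    split
    · next hep => exact hf e (by
        intro q hq
        rcases Finset.mem_insert.mp hq with rfl | hq'
        · exact hep
        · exact he q hq')
    · rfl
  · exact Ideal.mem_span_singleton.mpr ⟨g, rfl⟩

lemma Jdl_le_span (S : Finset (Fin k)) :
    Jdl k S ≤ Ideal.span ((fun q => (X q : R')) '' (S : Set (Fin k))) := by
  classical
  induction S using Finset.induction_on with
  | empty => rw [Jdl_empty]; exact bot_le
  | insert p S hp ih =>
      next =>
      refine (Jdl_insert_le p S).trans (sup_le ?_ ?_)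
      · refine ih.trans (Ideal.span_mono ?_)
        apply Set.image_mono
        simp
      · refine Ideal.span_mono ?_
        simp only [Set.singleton_subset_iff, Finset.coe_insert, Set.image_insert_eq]
        exact Set.mem_insert _ _

lemma maximalIdeal_le_span :
    IsLocalRing.maximalIdeal R' ≤ Ideal.span (Set.range (X : Fin k → R')) := by
  rw [← Jdl_univ]
  have := Jdl_le_span (k := k) Finset.univ
  rwa [Finset.coe_univ, Set.image_univ] at this



section ModuleSide

variable {N : Type} [AddCommGroup N] [Module (MvPowerSeries (Fin k) ℂ) N]

lemma exists_finsupp {I : Ideal R'} {x : N} (hx : x ∈ I • (⊤ : Submodule R' N)) :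
    ∃ c : N →₀ R', (∀ v, c v ∈ I) ∧ (c.sum fun v r => r • v) = x := by
  classical
  refine Submodule.smul_induction_on hx ?_ ?_
  · intro r hr n _
    refine ⟨Finsupp.single n r, fun v => ?_, ?_⟩
    · rw [Finsupp.single_apply]
      split
      · exact hr
      · exact I.zero_mem
    · exact Finsupp.sum_single_index (zero_smul _ n)
  · rintro x y ⟨cx, hcx, rfl⟩ ⟨cy, hcy, rfl⟩
    refine ⟨cx + cy, fun v => ?_, ?_⟩
    · rw [Finsupp.add_apply]
      exact I.add_mem (hcx v) (hcy v)
    · exact Finsupp.sum_add_index' (fun v => zero_smul _ v) (fun v r₁ r₂ => add_smul r₁ r₂ v)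

/-- Evaluation of a formal finite combination of monomials with module coefficients. -/
noncomputable def Phi : ((Fin k →₀ ℕ) →₀ N) →+ N where
  toFun m := m.sum fun e v => (monomial e 1 : R') • v
  map_zero' := Finsupp.sum_zero_index
  map_add' m₁ m₂ := Finsupp.sum_add_index' (fun e => smul_zero _) (fun e v₁ v₂ => smul_add _ _ _)

lemma Phi_single (e : Fin k →₀ ℕ) (v : N) :
    Phi (Finsupp.single e v) = (monomial e 1 : R') • v :=
  Finsupp.sum_single_index (smul_zero _)

lemma Phi_eq (m : (Fin k →₀ ℕ) →₀ N) :
    Phi m = ∑ e ∈ m.support, (monomial e 1 : R') • m e := rfl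

lemma degree_add' (a b : Fin k →₀ ℕ) : (a + b).degree = a.degree + b.degree := by
  simp [Finsupp.degree_eq_weight_one, map_add]

lemma degree_single_one (q : Fin k) : (Finsupp.single q 1 : Fin k →₀ ℕ).degree = 1 := by
  rw [Finsupp.degree_apply, Finsupp.support_single_ne_zero _ one_ne_zero]
  simp

/-- Every element of `𝔪^j • ⊤` is a combination of degree-`j` monomials with module
coefficients. -/
lemma exists_mono_rep {j : ℕ} {z : N}
    (hz : z ∈ (IsLocalRing.maximalIdeal R') ^ j • (⊤ : Submodule R' N)) :
    ∃ m : (Fin k →₀ ℕ) →₀ N, (∀ e ∈ m.support, e.degree = j) ∧ Phi m = z := by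
  classical
  induction j generalizing z with
  | zero =>
      refine ⟨Finsupp.single 0 z, ?_, ?_⟩
      · intro e he
        have := Finsupp.support_single_subset he
        simp only [Finset.mem_singleton] at this
        subst this
        exact map_zero _
      · rw [Phi_single, monomial_zero_one, one_smul]
  | succ j ih =>
      rw [pow_succ, mul_comm, ← smul_eq_mul, Submodule.smul_assoc] at hz
      refine Submodule.smul_induction_on hz ?_ ?_
      · intro r hr w hw
        obtain ⟨m₀, hm₀d, hm₀⟩ := ih hw
        have hr' : r ∈ Ideal.span (Set.range (X : Fin k → R')) := maximalIdeal_le_span hr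
        rw [← Ideal.submodule_span_eq, Submodule.mem_span_range_iff_exists_fun] at hr'
        obtain ⟨g, hg⟩ := hr'
        have hX : ∀ (q : Fin k) (e : Fin k →₀ ℕ),
            (monomial (e + Finsupp.single q 1) 1 : R') = monomial e 1 * X q := by
          intro q e
          rw [X, monomial_mul_monomial, one_mul]
        refine ⟨∑ q : Fin k, ∑ e ∈ m₀.support,
          Finsupp.single (e + Finsupp.single q 1) (g q • m₀ e), ?_, ?_⟩
        · intro e he
          obtain ⟨q, _, he2⟩ := Finsupp.mem_support_finset_sum e he
          obtain ⟨e', he'mem, he3⟩ := Finsupp.mem_support_finset_sum e he2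
          have := Finsupp.support_single_subset he3
          simp only [Finset.mem_singleton] at this
          subst this
          rw [degree_add', hm₀d e' he'mem, degree_single_one]
        · have key : ∀ (q : Fin k), ∀ e ∈ m₀.support,
              (monomial (e + Finsupp.single q 1) 1 : R') • (g q • m₀ e)
              = (g q • (X q : R')) • ((monomial e 1 : R') • m₀ e) := by
            intro q e _
            rw [hX]
            simp only [smul_smul, smul_eq_mul]
            congr 1
            ring
          rw [map_sum]
          calc
            ∑ q : Fin k, Phi (∑ e ∈ m₀.support,
                Finsupp.single (e + Finsupp.single q 1) (g q • m₀ e))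
                = ∑ q : Fin k, ∑ e ∈ m₀.support,
                  (monomial (e + Finsupp.single q 1) 1 : R') • (g q • m₀ e) := by
                refine Finset.sum_congr rfl fun q _ => ?_
                rw [map_sum]
                exact Finset.sum_congr rfl fun e _ => Phi_single _ _
            _ = ∑ q : Fin k, (g q • (X q : R')) • Phi m₀ := by
                refine Finset.sum_congr rfl fun q _ => ?_
                rw [Phi_eq, Finset.smul_sum]
                exact Finset.sum_congr rfl (key q)
            _ = (∑ q : Fin k, g q • (X q : R')) • Phi m₀ := (Finset.sum_smul).symm
            _ = r • w := by rw [hg, hm₀]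
      · rintro x y ⟨mx, hmx, rfl⟩ ⟨my, hmy, rfl⟩
        refine ⟨mx + my, ?_, map_add _ _ _⟩
        intro e he
        rcases Finset.mem_union.mp (Finsupp.support_add he) with h | h
        · exact hmx e h
        · exact hmy e h



lemma X_mem_maximalIdeal' (q : Fin k) : (X q : R') ∈ IsLocalRing.maximalIdeal R' := by
  rw [← Jdl_univ]
  exact X_mem_Jdl (Finset.mem_univ q)

lemma monomial_mem_pow (e : Fin k →₀ ℕ) :
    (monomial e 1 : R') ∈ (IsLocalRing.maximalIdeal R') ^ e.degree := by
  classical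
  induction e using Finsupp.induction with
  | zero => rw [map_zero, pow_zero, Ideal.one_eq_top, monomial_zero_one]; exact Submodule.mem_top
  | single_add q b f _ hb ih =>
      have hmon : (monomial (Finsupp.single q b + f) 1 : R')
          = (X q : R') ^ b * monomial f 1 := by
        rw [X_pow_eq, monomial_mul_monomial, one_mul]
      rw [hmon, degree_add', pow_add]
      refine Ideal.mul_mem_mul ?_ ih
      have hdeg : (Finsupp.single q b : Fin k →₀ ℕ).degree = b := by
        rw [Finsupp.degree_apply, Finsupp.support_single_ne_zero _ hb, Finset.sum_singleton,
          Finsupp.single_eq_same]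
      rw [hdeg]
      exact Ideal.pow_mem_pow (X_mem_maximalIdeal' q) b

/-- Flatness colon lemma: if `X q • u ∈ Jdl S • ⊤` with `q ∉ S` and `N` flat, then
`u ∈ Jdl S • ⊤`. -/
lemma flat_colon {S : Finset (Fin k)} {q : Fin k} (hq : q ∉ S)
    [Module.Flat R' N] (u : N)
    (hu : (X q : R') • u ∈ Jdl k S • (⊤ : Submodule R' N)) :
    u ∈ Jdl k S • (⊤ : Submodule R' N) := by
  classical
  obtain ⟨c, hc, hsum⟩ := exists_finsupp hu
  set f : Option c.support → R' := fun t => t.elim (X q) (fun t => c t.1) with hf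
  set xx : Option c.support → N := fun t => t.elim u (fun t => -t.1) with hxx
  have hrel : ∑ t : Option c.support, f t • xx t = 0 := by
    rw [Fintype.sum_option]
    have : ∑ t : c.support, f (some t) • xx (some t)
        = -∑ t : c.support, c t.1 • (t.1 : N) := by
      rw [← Finset.sum_neg_distrib]
      exact Finset.sum_congr rfl fun t _ => by simp [hf, hxx]
    rw [this]
    have h2 : ∑ t : c.support, c t.1 • (t.1 : N) = c.sum fun v r => r • v := by
      rw [Finsupp.sum, ← Finset.sum_coe_sort c.support]
    rw [h2, hsum]
    simp [hf, hxx]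
  obtain ⟨κ, a, yv, hxa, hfa⟩ := Module.Flat.isTrivialRelation_of_sum_smul_eq_zero hrel
  have hmem : ∀ s : Fin κ, a none s ∈ Jdl k S := by
    intro s
    apply X_mul_mem_Jdl hq
    have := hfa s
    rw [Fintype.sum_option] at this
    have h3 : (X q : R') * a none s
        = -∑ t : c.support, f (some t) * a (some t) s := by
      have h4 : (X q : R') * a none s
          + ∑ t : c.support, f (some t) * a (some t) s = 0 := by
        simpa [hf] using this
      exact eq_neg_of_add_eq_zero_left h4
    rw [h3]
    refine Submodule.neg_mem _ (Submodule.sum_mem _ fun t _ => ?_)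
    exact Ideal.mul_mem_right _ _ (hc t.1)
  have := hxa none
  rw [hxx] at this
  simp only [Option.elim] at this
  rw [this]
  exact Submodule.sum_mem _ fun s _ =>
    Submodule.smul_mem_smul (hmem s) Submodule.mem_top


lemma mem_maximalIdeal_of_constantCoeff {f : MvPowerSeries (Fin k) ℂ}
    (h : constantCoeff f = 0) : f ∈ IsLocalRing.maximalIdeal R' := by
  rw [IsLocalRing.mem_maximalIdeal, mem_nonunits_iff]
  intro hu
  rw [MvPowerSeries.isUnit_iff_constantCoeff, h] at hu
  exact not_isUnit_zero hu

end ModuleSide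

section WithAlgebra

variable {A : Type*} [Ring A] [Algebra (MvPowerSeries (Fin k) ℂ) A]
variable {N₁ N₂ N₃ : Type}
  [AddCommGroup N₁] [Module (MvPowerSeries (Fin k) ℂ) N₁] [Module A N₁]
  [IsScalarTower (MvPowerSeries (Fin k) ℂ) A N₁]
  [AddCommGroup N₂] [Module (MvPowerSeries (Fin k) ℂ) N₂] [Module A N₂]
  [IsScalarTower (MvPowerSeries (Fin k) ℂ) A N₂]
  [AddCommGroup N₃] [Module (MvPowerSeries (Fin k) ℂ) N₃] [Module A N₃]
  [IsScalarTower (MvPowerSeries (Fin k) ℂ) A N₃]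

lemma map_smul_top (f : N₁ →ₗ[A] N₂) (I : Ideal R') {x : N₁}
    (hx : x ∈ I • (⊤ : Submodule R' N₁)) : f x ∈ I • (⊤ : Submodule R' N₂) := by
  refine Submodule.smul_induction_on hx ?_ ?_
  · intro r hr n _
    have : f (r • n) = r • f n := f.map_smul_of_tower r n
    rw [this]
    exact Submodule.smul_mem_smul hr Submodule.mem_top
  · intro x y hx hy
    rw [map_add]
    exact Submodule.add_mem _ hx hy

/-- The key lemma for the backward direction: a cycle lying in `𝔪^j • ⊤` is, modulo
a boundary, in `𝔪^(j+1) • ⊤`, provided the reduced complex is exact at this spot and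
the next module is flat. -/
lemma core (d₁ : N₁ →ₗ[A] N₂) (d₂ : N₂ →ₗ[A] N₃) [Module.Flat R' N₃]
    (hred : ∀ y : N₂, d₂ y ∈ IsLocalRing.maximalIdeal R' • (⊤ : Submodule R' N₃) →
      ∃ x : N₁, y - d₁ x ∈ IsLocalRing.maximalIdeal R' • (⊤ : Submodule R' N₂))
    (j : ℕ) (z : N₂) (hz : z ∈ (IsLocalRing.maximalIdeal R') ^ j • (⊤ : Submodule R' N₂))
    (hzc : d₂ z = 0) :
    ∃ x : N₁, z - d₁ x ∈ (IsLocalRing.maximalIdeal R') ^ (j + 1) • (⊤ : Submodule R' N₂) := by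
  classical
  obtain ⟨m, hmd, hm⟩ := exists_mono_rep hz
  have hz' : z = ∑ t : m.support, (monomial t.1 1 : R') • m t.1 := by
    rw [← hm, Phi_eq, ← Finset.sum_coe_sort m.support]
  have hrel : ∑ t : m.support, (monomial t.1 1 : R') • d₂ (m t.1) = 0 := by
    have : ∑ t : m.support, (monomial t.1 1 : R') • d₂ (m t.1)
        = d₂ (∑ t : m.support, (monomial t.1 1 : R') • m t.1) := by
      rw [map_sum]
      exact Finset.sum_congr rfl fun t _ => (d₂.map_smul_of_tower _ _).symm
    rw [this, ← hz', hzc]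
  obtain ⟨κ, a, yv, hxa, hfa⟩ := Module.Flat.isTrivialRelation_of_sum_smul_eq_zero hrel
  have hA : ∀ (t : m.support) (s : Fin κ), a t s ∈ IsLocalRing.maximalIdeal R' := by
    intro t₀ s
    apply mem_maximalIdeal_of_constantCoeff
    have h0 := congrArg (coeff t₀.1) (hfa s)
    rw [map_sum, map_zero] at h0
    have h1 : ∀ t : m.support, t ≠ t₀ →
        coeff t₀.1 ((monomial t.1 1 : R') * a t s) = 0 := by
      intro t ht
      rw [coeff_monomial_mul]
      split
      · next hle =>
          exfalso
          apply ht
          have hdeq : (t.1 : Fin k →₀ ℕ).degree = (t₀.1 : Fin k →₀ ℕ).degree := by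
            rw [hmd t.1 t.2, hmd t₀.1 t₀.2]
          have : t.1 = t₀.1 := by
            have hsub : t₀.1 - t.1 + t.1 = t₀.1 := tsub_add_cancel_of_le hle
            have hdadd : (t₀.1 - t.1 : Fin k →₀ ℕ).degree + (t.1 : Fin k →₀ ℕ).degree
                = (t₀.1 : Fin k →₀ ℕ).degree := by
              rw [← degree_add', hsub]
            have hz0 : (t₀.1 - t.1 : Fin k →₀ ℕ).degree = 0 := by omega
            rw [Finsupp.degree_eq_zero_iff] at hz0
            have := hsub
            rw [hz0, zero_add] at this
            exact this
          exact Subtype.ext this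
      · rfl
    rw [Finset.sum_eq_single_of_mem t₀ (Finset.mem_univ t₀) (fun t _ ht => h1 t ht)] at h0
    rw [coeff_monomial_mul, if_pos le_rfl, one_mul, tsub_self] at h0
    rw [← coeff_zero_eq_constantCoeff_apply]
    exact h0
  have hd : ∀ t : m.support, d₂ (m t.1) ∈ IsLocalRing.maximalIdeal R' • (⊤ : Submodule R' N₃) := by
    intro t
    rw [show d₂ (m t.1) = ∑ s : Fin κ, a t s • yv s from hxa t]
    exact Submodule.sum_mem _ fun s _ => Submodule.smul_mem_smul (hA t s) Submodule.mem_top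
  choose xs hxs using fun t : m.support => hred (m t.1) (hd t)
  refine ⟨∑ t : m.support, (monomial t.1 1 : R') • xs t, ?_⟩
  have hsub : z - d₁ (∑ t : m.support, (monomial t.1 1 : R') • xs t)
      = ∑ t : m.support, (monomial t.1 1 : R') • (m t.1 - d₁ (xs t)) := by
    rw [map_sum, hz', ← Finset.sum_sub_distrib]
    refine Finset.sum_congr rfl fun t _ => ?_
    rw [smul_sub, d₁.map_smul_of_tower]
  rw [hsub, pow_succ, ← smul_eq_mul, Submodule.smul_assoc]
  refine Submodule.sum_mem _ fun t _ => ?_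
  have hmem : (monomial t.1 1 : R') ∈ (IsLocalRing.maximalIdeal R') ^ j := by
    have := monomial_mem_pow (k := k) t.1
    rwa [hmd t.1 t.2] at this
  exact Submodule.smul_mem_smul hmem (hxs t)

end WithAlgebra

end Stmt4Aux

/-- Let `𝕜 = ℂ[[x₁,…,x_k]]` (formal power series, a complete local ring
with maximal ideal `𝔪`) and let `Cat_𝕜` be a `𝕜`-linear abelian category in which every
object is `𝔪`-adically separated.  Then for `M ∈ D⁻(Cat_𝕜)`, one has `M ∈ D^b(Cat_𝕜)`
iff `ℂ ⊗^L_𝕜 M ∈ D^b(Cat)`, where `Cat` is the subcategory of objects killed by `𝔪`.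

Formalization: `Cat_𝕜` is realized as the category of finitely generated modules over a
`𝕜`-algebra `A` (every such Noetherian `𝕜`-linear category is of this form); the
separatedness hypothesis says `⋂ₙ 𝔪ⁿ N = 0` for each object `N`.  An object of
`D⁻(Cat_𝕜)` is represented by a bounded-above complex `(M_i, d_i)` of objects that are
flat over `𝕜` (so that `ℂ ⊗^L_𝕜 M` is computed by the termwise reduction `M/𝔪M`).
`M ∈ D^b` means its homology is bounded below (exactness in all low degrees),
and `ℂ ⊗^L_𝕜 M ∈ D^b` likewise for the reduced complex: exactness of `M/𝔪M` at spot
`i+1` says that any `y` with `d y ∈ 𝔪·M` is `d x + 𝔪·M` for some `x` (the other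
inclusion being automatic from `d ∘ d = 0`). -/
theorem stmt4 (k : ℕ) (A : Type*) [Ring A] [Algebra (MvPowerSeries (Fin k) ℂ) A]
    -- every object of the category is 𝔪-adically separated:
    (hsep : ∀ (N : Type) [AddCommGroup N] [Module (MvPowerSeries (Fin k) ℂ) N]
      [Module A N] [IsScalarTower (MvPowerSeries (Fin k) ℂ) A N], Module.Finite A N →
      (⨅ n : ℕ, (IsLocalRing.maximalIdeal (MvPowerSeries (Fin k) ℂ) ^ n) •
        (⊤ : Submodule (MvPowerSeries (Fin k) ℂ) N)) = ⊥)
    -- a bounded-above complex of objects of `Cat_𝕜`, with `𝕜`-flat terms: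
    (M : ℤ → Type) [∀ i, AddCommGroup (M i)]
    [∀ i, Module (MvPowerSeries (Fin k) ℂ) (M i)] [∀ i, Module A (M i)]
    [∀ i, IsScalarTower (MvPowerSeries (Fin k) ℂ) A (M i)]
    (hfg : ∀ i, Module.Finite A (M i))
    (hflat : ∀ i, Module.Flat (MvPowerSeries (Fin k) ℂ) (M i))
    (d : ∀ i : ℤ, M i →ₗ[A] M (i + 1))
    (hdd : ∀ i : ℤ, ∀ x : M i, d (i + 1) (d i x) = 0)
    (hbdd : ∃ n : ℤ, ∀ i : ℤ, n ≤ i → ∀ x : M i, x = 0) :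
    -- `M ∈ D^b(Cat_𝕜)` ...
    (∃ n : ℤ, ∀ i : ℤ, i ≤ n → ∀ y : M (i + 1), d (i + 1) y = 0 → ∃ x : M i, d i x = y)
    ↔
    -- ... iff `ℂ ⊗^L_𝕜 M ∈ D^b(Cat)`:
    (∃ n : ℤ, ∀ i : ℤ, i ≤ n → ∀ y : M (i + 1),
      d (i + 1) y ∈ (IsLocalRing.maximalIdeal (MvPowerSeries (Fin k) ℂ)) •
        (⊤ : Submodule (MvPowerSeries (Fin k) ℂ) (M (i + 1 + 1))) →
      ∃ x : M i, y - d i x ∈ (IsLocalRing.maximalIdeal (MvPowerSeries (Fin k) ℂ)) •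
        (⊤ : Submodule (MvPowerSeries (Fin k) ℂ) (M (i + 1)))) := by
  classical
  constructor
  · -- forward direction
    rintro ⟨n, hn⟩
    have E : ∀ S : Finset (Fin k), ∀ i : ℤ, i ≤ n - S.card → ∀ y : M (i + 1),
        d (i + 1) y ∈ (Stmt4Aux.Jdl k S) •
          (⊤ : Submodule (MvPowerSeries (Fin k) ℂ) (M (i + 1 + 1))) →
        ∃ x : M i, y - d i x ∈ (Stmt4Aux.Jdl k S) •
          (⊤ : Submodule (MvPowerSeries (Fin k) ℂ) (M (i + 1))) := by
      intro S
      induction S using Finset.induction_on with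
      | empty =>
          intro i hi y hy
          rw [Stmt4Aux.Jdl_empty, Submodule.bot_smul, Submodule.mem_bot] at hy
          obtain ⟨x, hx⟩ := hn i (by simpa using hi) y hy
          exact ⟨x, by rw [hx, sub_self]; exact Submodule.zero_mem _⟩
      | @insert p S hp ih =>
          intro i hi y hy
          have hcard : ((insert p S).card : ℤ) = (S.card : ℤ) + 1 := by
            rw [Finset.card_insert_of_notMem hp]
            push_cast
            ring
          rw [hcard] at hi
          have hy2 : d (i + 1) y ∈
              (Stmt4Aux.Jdl k S) • (⊤ : Submodule (MvPowerSeries (Fin k) ℂ) (M (i + 1 + 1))) ⊔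
              (Ideal.span {(MvPowerSeries.X p : MvPowerSeries (Fin k) ℂ)}) • ⊤ := by
            rw [← Submodule.sup_smul]
            exact Submodule.smul_mono_left (Stmt4Aux.Jdl_insert_le p S) hy
          obtain ⟨av, hav, bv, hbv, hab⟩ := Submodule.mem_sup.1 hy2
          rw [Submodule.ideal_span_singleton_smul] at hbv
          obtain ⟨u, -, hu⟩ := Set.mem_smul_set.1 hbv
          have hdd2 : d (i + 1 + 1) av
              + (MvPowerSeries.X p : MvPowerSeries (Fin k) ℂ) • d (i + 1 + 1) u = 0 := by
            have h0 := hdd (i + 1) y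
            rw [← hab, ← hu, map_add] at h0
            rw [← (d (i + 1 + 1)).map_smul_of_tower]
            exact h0
          have hXdu : (MvPowerSeries.X p : MvPowerSeries (Fin k) ℂ) • d (i + 1 + 1) u ∈
              (Stmt4Aux.Jdl k S) •
                (⊤ : Submodule (MvPowerSeries (Fin k) ℂ) (M (i + 1 + 1 + 1))) := by
            have : (MvPowerSeries.X p : MvPowerSeries (Fin k) ℂ) • d (i + 1 + 1) u
                = -d (i + 1 + 1) av := eq_neg_of_add_eq_zero_right hdd2
            rw [this]
            exact Submodule.neg_mem _ (Stmt4Aux.map_smul_top (d (i + 1 + 1)) _ hav)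
          haveI := hflat (i + 1 + 1 + 1)
          have hdu := Stmt4Aux.flat_colon hp (d (i + 1 + 1) u) hXdu
          obtain ⟨x₁, hx₁⟩ := ih (i + 1) (by omega) u hdu
          have h5 : d (i + 1) (y - (MvPowerSeries.X p : MvPowerSeries (Fin k) ℂ) • x₁) ∈
              (Stmt4Aux.Jdl k S) • (⊤ : Submodule (MvPowerSeries (Fin k) ℂ) (M (i + 1 + 1))) := by
            rw [map_sub, (d (i + 1)).map_smul_of_tower, ← hab, ← hu]
            have : av + (MvPowerSeries.X p : MvPowerSeries (Fin k) ℂ) • u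
                - (MvPowerSeries.X p : MvPowerSeries (Fin k) ℂ) • d (i + 1) x₁
                = av + (MvPowerSeries.X p : MvPowerSeries (Fin k) ℂ) • (u - d (i + 1) x₁) := by
              rw [smul_sub]; abel
            rw [this]
            exact Submodule.add_mem _ hav (Submodule.smul_mem _ _ hx₁)
          obtain ⟨x, hx⟩ := ih i (by omega) _ h5
          refine ⟨x, ?_⟩
          have h6 : y - d i x = (MvPowerSeries.X p : MvPowerSeries (Fin k) ℂ) • x₁
              + ((y - (MvPowerSeries.X p : MvPowerSeries (Fin k) ℂ) • x₁) - d i x) := by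
            abel
          rw [h6]
          refine Submodule.add_mem _ ?_ ?_
          · exact Submodule.smul_mem_smul (Stmt4Aux.X_mem_Jdl (Finset.mem_insert_self p S))
              Submodule.mem_top
          · exact Submodule.smul_mono_left (Stmt4Aux.Jdl_mono (Finset.subset_insert p S)) hx
    refine ⟨n - k, fun i hi y hy => ?_⟩
    have hki : i ≤ n - (Finset.univ : Finset (Fin k)).card := by
      rw [Finset.card_univ, Fintype.card_fin]
      omega
    rw [← Stmt4Aux.Jdl_univ] at hy
    obtain ⟨x, hx⟩ := E Finset.univ i hki y hy
    rw [← Stmt4Aux.Jdl_univ]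
    exact ⟨x, hx⟩
  · -- backward direction
    rintro ⟨n, hn⟩
    refine ⟨n, fun i hi y hy => ?_⟩
    have hiter : ∀ j : ℕ, ∃ x : M i, y - d i x ∈
        (IsLocalRing.maximalIdeal (MvPowerSeries (Fin k) ℂ)) ^ j •
          (⊤ : Submodule (MvPowerSeries (Fin k) ℂ) (M (i + 1))) := by
      intro j
      induction j with
      | zero =>
          refine ⟨0, ?_⟩
          rw [pow_zero, Ideal.one_eq_top, Submodule.top_smul]
          exact Submodule.mem_top
      | succ j ihj =>
          obtain ⟨x, hx⟩ := ihj
          haveI := hflat (i + 1 + 1)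
          have hcyc : d (i + 1) (y - d i x) = 0 := by
            rw [map_sub, hy, hdd i x, sub_zero]
          obtain ⟨x', hx'⟩ := Stmt4Aux.core (d i) (d (i + 1))
            (fun w hw => hn i hi w hw) j (y - d i x) hx hcyc
          refine ⟨x + x', ?_⟩
          rw [map_add, ← sub_sub]
          exact hx'
    set P : Submodule A (M (i + 1)) := LinearMap.range (d i) with hP
    haveI : Module.Finite A (M (i + 1)) := hfg (i + 1)
    have hQ := hsep (M (i + 1) ⧸ P) inferInstance
    have hmem : ∀ j : ℕ, P.mkQ y ∈ (IsLocalRing.maximalIdeal (MvPowerSeries (Fin k) ℂ)) ^ j •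
        (⊤ : Submodule (MvPowerSeries (Fin k) ℂ) (M (i + 1) ⧸ P)) := by
      intro j
      obtain ⟨x, hx⟩ := hiter j
      have h1 : P.mkQ y = P.mkQ (y - d i x) := by
        rw [map_sub]
        have h2 : P.mkQ (d i x) = 0 := by
          rw [Submodule.mkQ_apply, Submodule.Quotient.mk_eq_zero]
          exact ⟨x, rfl⟩
        rw [h2, sub_zero]
      rw [h1]
      have h3 : P.mkQ (y - d i x) = (P.mkQ.restrictScalars (MvPowerSeries (Fin k) ℂ)) (y - d i x) := rfl
      rw [h3]
      have h4 := Submodule.mem_map_of_mem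
        (f := P.mkQ.restrictScalars (MvPowerSeries (Fin k) ℂ)) hx
      rw [Submodule.map_smul''] at h4
      exact Submodule.smul_mono le_rfl le_top h4
    have h5 : P.mkQ y ∈ (⊥ : Submodule (MvPowerSeries (Fin k) ℂ) (M (i + 1) ⧸ P)) := by
      rw [← hQ]
      exact Submodule.mem_iInf _ |>.2 hmem
    rw [Submodule.mem_bot] at h5
    rw [Submodule.mkQ_apply, Submodule.Quotient.mk_eq_zero] at h5
    exact h5
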